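/- Let x, y ∈ ℝᴺ. If x is supermajorized by y (x ≺^w y), then there exists u ∈ ℝᴺ with x_i ≥ u_i for every i = 1,…,N such that u is majorized by y (u ≺ y). -/
import Mathlib

/-- The decreasing rearrangement `x↓` of a vector `x ∈ ℝᴺ`. -/
noncomputable def decRearrange {N : ℕ} (x : Fin N → ℝ) : Fin N → ℝ :=
  fun i => x (Tuple.sort x i.rev)

/-- `∑_{i=1}^{k} x↓_i`, the sum of the `k` largest entries of `x` (0-indexed: indices `< k`). -/
noncomputable def topSum {N : ℕ} (x : Fin N → ℝ) (k : ℕ) : ℝ :=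
  ∑ i ∈ Finset.univ.filter (fun i : Fin N => (i : ℕ) < k), decRearrange x i

/-- `∑_{i=l+1}^{N} x↓_i` (1-indexed), i.e. the sum of `x↓_i` over 0-indexed indices `i ≥ l`. -/
noncomputable def botSum {N : ℕ} (x : Fin N → ℝ) (l : ℕ) : ℝ :=
  ∑ i ∈ Finset.univ.filter (fun i : Fin N => l ≤ (i : ℕ)), decRearrange x i

/-- `x ≺ y` : `x` is majorized by `y`. -/
noncomputable def IsMajorizedBy {N : ℕ} (x y : Fin N → ℝ) : Prop :=
  (∀ k : ℕ, topSum x k ≤ topSum y k) ∧ (∑ i, x i = ∑ i, y i)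

/-- `x ≺_w y` : `x` is submajorized (weakly majorized from below) by `y`. -/
noncomputable def IsSubmajorizedBy {N : ℕ} (x y : Fin N → ℝ) : Prop :=
  ∀ k : ℕ, topSum x k ≤ topSum y k

/-- `x ≺^w y` : `x` is supermajorized (weakly majorized from above) by `y`:
`∑_{i=l}^{N} x↓_i ≥ ∑_{i=l}^{N} y↓_i` for all `l`. -/
noncomputable def IsSupermajorizedBy {N : ℕ} (x y : Fin N → ℝ) : Prop :=
  ∀ l : ℕ, botSum y l ≤ botSum x l

section Helpers

variable {N : ℕ}

lemma decRearrange_eq_comp (x : Fin N → ℝ) :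
    decRearrange x = x ∘ (Fin.revPerm.trans (Tuple.sort x)) := rfl

lemma antitone_decRearrange (x : Fin N → ℝ) : Antitone (decRearrange x) := by
  intro i j hij
  exact Tuple.monotone_sort x (Fin.rev_le_rev.mpr hij)

lemma sum_decRearrange (x : Fin N → ℝ) : ∑ i, decRearrange x i = ∑ i, x i := by
  rw [decRearrange_eq_comp]
  exact Equiv.sum_comp (Fin.revPerm.trans (Tuple.sort x)) x

lemma antitone_unique {f g : Fin N → ℝ} (σ : Equiv.Perm (Fin N)) (hfg : f = g ∘ σ)
    (hf : Antitone f) (hg : Antitone g) : f = g := by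
  have h1 : Monotone (g ∘ ⇑(Fin.revPerm.trans σ)) := by
    have : (g ∘ ⇑(Fin.revPerm.trans σ)) = f ∘ Fin.rev := by
      funext i; simp [hfg]
    rw [this]
    exact fun i j hij => hf (Fin.rev_le_rev.mpr hij)
  have h2 : Monotone (g ∘ ⇑(Fin.revPerm : Equiv.Perm (Fin N))) := by
    exact fun i j hij => hg (Fin.rev_le_rev.mpr hij)
  have h3 := Tuple.unique_monotone h1 h2
  funext i
  have := congrFun h3 i.rev
  simpa [hfg] using this

lemma topSum_zero (z : Fin N → ℝ) : topSum z 0 = 0 := by simp [topSum]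

lemma topSum_succ (z : Fin N → ℝ) {m : ℕ} (hm : m < N) :
    topSum z (m + 1) = topSum z m + decRearrange z ⟨m, hm⟩ := by
  unfold topSum
  have hins : Finset.univ.filter (fun i : Fin N => (i : ℕ) < m + 1) =
      insert ⟨m, hm⟩ (Finset.univ.filter (fun i : Fin N => (i : ℕ) < m)) := by
    ext i
    simp [Fin.ext_iff]
    omega
  rw [hins, Finset.sum_insert (by simp)]
  ring

lemma topSum_of_ge (z : Fin N → ℝ) {k : ℕ} (hk : N ≤ k) : topSum z k = ∑ i, z i := by
  unfold topSum
  have : Finset.univ.filter (fun i : Fin N => (i : ℕ) < k) = Finset.univ := by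
    ext i; simp; exact lt_of_lt_of_le i.isLt hk
  rw [this]
  exact sum_decRearrange z

lemma topSum_add_botSum (z : Fin N → ℝ) (l : ℕ) : topSum z l + botSum z l = ∑ i, z i := by
  unfold topSum botSum
  rw [show Finset.univ.filter (fun i : Fin N => l ≤ (i : ℕ)) =
      Finset.univ.filter (fun i : Fin N => ¬ ((i : ℕ) < l)) by ext i; simp]
  rw [Finset.sum_filter_add_sum_filter_not]
  exact sum_decRearrange z

end Helpers

/-- **Lemma 2, converse direction.** If `x ≺^w y` then there is `u` with `xᵢ ≥ uᵢ` for all `i`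
such that `u ≺ y`. -/
theorem supermajorized_exists_pointwise_le_majorized {N : ℕ} (x y : Fin N → ℝ)
    (h : IsSupermajorizedBy x y) :
    ∃ u : Fin N → ℝ, (∀ i, u i ≤ x i) ∧ IsMajorizedBy u y := by
  rcases Nat.eq_zero_or_pos N with hN | hN
  · subst hN
    exact ⟨y, fun i => i.elim0, fun k => le_rfl, rfl⟩
  -- total sums
  have hbot0 : ∀ z : Fin N → ℝ, botSum z 0 = ∑ i, z i := by
    intro z
    have := topSum_add_botSum z 0
    rw [topSum_zero] at this
    linarith
  have hyx : ∑ i, y i ≤ ∑ i, x i := by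
    have := h 0
    rwa [hbot0, hbot0] at this
  -- find the threshold a by IVT
  set g : ℝ → ℝ := fun a => ∑ i, min (x i) a with hg_def
  have hg : Continuous g := by
    apply continuous_finset_sum
    exact fun i _ => continuous_const.min continuous_id
  obtain ⟨i₁, -, hi₁⟩ := Finset.exists_max_image Finset.univ x ⟨⟨0, hN⟩, Finset.mem_univ _⟩
  set a₁ : ℝ := x i₁ with ha₁def
  have hga₁ : g a₁ = ∑ i, x i := by
    apply Finset.sum_congr rfl
    intro i _
    exact min_eq_left (hi₁ i (Finset.mem_univ i))
  set a₀ : ℝ := min ((∑ i, y i) / N) a₁ with ha₀def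
  have hga₀ : g a₀ ≤ ∑ i, y i := by
    have h1 : g a₀ ≤ ∑ _i : Fin N, a₀ :=
      Finset.sum_le_sum fun i _ => min_le_right _ _
    have h2 : ∑ _i : Fin N, a₀ = N * a₀ := by
      rw [Finset.sum_const, Finset.card_univ, Fintype.card_fin, nsmul_eq_mul]
    have h3 : (N : ℝ) * a₀ ≤ (N : ℝ) * ((∑ i, y i) / N) := by
      apply mul_le_mul_of_nonneg_left (min_le_left _ _) (by positivity)
    have h4 : (N : ℝ) * ((∑ i, y i) / N) = ∑ i, y i := by
      field_simp
    linarith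
  have hIVT : ∑ i, y i ∈ g '' (Set.Icc a₀ a₁) := by
    apply intermediate_value_Icc (min_le_right _ _) hg.continuousOn
    exact ⟨hga₀, by rw [hga₁]; exact hyx⟩
  obtain ⟨a, -, ha⟩ := hIVT
  -- the candidate u
  set u : Fin N → ℝ := fun i => min (x i) a with hu_def
  set w : Fin N → ℝ := fun i => min (decRearrange x i) a with hw_def
  have hsum_u : ∑ i, u i = ∑ i, y i := ha
  -- decRearrange u = w
  have hw : decRearrange u = w := by
    set σx := Fin.revPerm.trans (Tuple.sort x) with hσx
    set σu := Fin.revPerm.trans (Tuple.sort u) with hσu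
    have hwu : w = u ∘ σx := by
      funext i; rfl
    apply antitone_unique (σu.trans σx.symm)
    · funext i
      simp [hwu, decRearrange_eq_comp u, ← hσu]
    · intro i j hij
      exact antitone_decRearrange u hij
    · intro i j hij
      exact min_le_min (antitone_decRearrange x hij) le_rfl
  -- the split index m
  obtain ⟨m, hmN, hP2, hP3⟩ :
      ∃ m ≤ N, (∀ j : Fin N, (j : ℕ) < m → a < decRearrange x j) ∧
        (∀ i : Fin N, m ≤ (i : ℕ) → decRearrange x i ≤ a) := by
    by_cases hex : ∃ i : Fin N, decRearrange x i ≤ a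
    · set s := Finset.univ.filter (fun i : Fin N => decRearrange x i ≤ a) with hs_def
      have hs : s.Nonempty := by
        obtain ⟨i, hi⟩ := hex
        exact ⟨i, by simp [hs_def, hi]⟩
      set i₀ := s.min' hs with hi₀def
      have hi₀mem : decRearrange x i₀ ≤ a := by
        have := s.min'_mem hs
        simpa [hs_def] using this
      refine ⟨(i₀ : ℕ), (i₀.isLt).le, ?_, ?_⟩
      · intro j hj
        by_contra hc
        push_neg at hc
        have hjs : j ∈ s := by simp [hs_def, hc]
        have := s.min'_le j hjs
        rw [← hi₀def] at this
        omega
      · intro i hi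
        exact le_trans (antitone_decRearrange x (by exact hi : i₀ ≤ i)) hi₀mem
    · push_neg at hex
      exact ⟨N, le_rfl, fun j _ => hex j, fun i hi => absurd i.isLt (by omega)⟩
  -- bottom sums of u agree with x from m on
  have hGbot : ∀ k, m ≤ k → botSum u k = botSum x k := by
    intro k hk
    unfold botSum
    rw [hw]
    apply Finset.sum_congr rfl
    intro i hi
    simp only [Finset.mem_filter] at hi
    exact min_eq_left (hP3 i (le_trans hk hi.2))
  have hGtop : ∀ k, m ≤ k → topSum u k ≤ topSum y k := by
    intro k hk
    have h1 := topSum_add_botSum u k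
    have h2 := topSum_add_botSum y k
    have h3 := hGbot k hk
    have h4 := h k
    rw [hsum_u] at h1
    linarith
  -- top sums of u below m are k * a
  have hGconst : ∀ k, k ≤ m → topSum u k = k * a := by
    intro k hk
    induction k with
    | zero => simp [topSum_zero]
    | succ j ih =>
      have hjN : j < N := lt_of_lt_of_le (lt_of_lt_of_le (Nat.lt_succ_self j) hk) hmN
      rw [topSum_succ u hjN, ih (by omega), hw]
      have : w ⟨j, hjN⟩ = a := min_eq_right (le_of_lt (hP2 ⟨j, hjN⟩ (by simpa using by omega)))
      rw [this]
      push_cast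
      ring
  have hGm : (m : ℝ) * a ≤ topSum y m := by
    rw [← hGconst m le_rfl]
    exact hGtop m le_rfl
  refine ⟨u, fun i => min_le_left _ _, ?_, hsum_u⟩
  intro k
  rcases le_or_gt m k with hk | hk
  · exact hGtop k hk
  · -- k < m ≤ N
    have hkN : k < N := lt_of_lt_of_le hk hmN
    rw [hGconst k hk.le]
    set c : ℝ := decRearrange y ⟨k, hkN⟩ with hc_def
    have L2 : (k : ℝ) * c ≤ topSum y k := by
      have : ∀ j, j ≤ k → (j : ℝ) * c ≤ topSum y j := by
        intro j hj
        induction j with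
        | zero => simp [topSum_zero]
        | succ i ih =>
          have hiN : i < N := lt_of_lt_of_le (Nat.lt_of_succ_le hj) hkN.le
          rw [topSum_succ y hiN]
          have hc : c ≤ decRearrange y ⟨i, hiN⟩ :=
            antitone_decRearrange y (by simp [Fin.le_def]; omega)
          have := ih (by omega)
          push_cast
          linarith
      exact this k le_rfl
    have L1 : topSum y m ≤ topSum y k + ((m : ℝ) - k) * c := by
      have key : ∀ d, k + d ≤ N → topSum y (k + d) ≤ topSum y k + (d : ℝ) * c := by
        intro d hd
        induction d with
        | zero => simp
        | succ e ih =>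
          have heN : k + e < N := by omega
          rw [show k + (e + 1) = (k + e) + 1 by ring, topSum_succ y heN]
          have hc : decRearrange y ⟨k + e, heN⟩ ≤ c :=
            antitone_decRearrange y (by simp [Fin.le_def])
          have := ih (by omega)
          push_cast
          linarith
      have := key (m - k) (by omega)
      rw [show k + (m - k) = m by omega] at this
      have hcast : ((m - k : ℕ) : ℝ) = (m : ℝ) - k := by
        push_cast [Nat.cast_sub hk.le]
        ring
      rw [hcast] at this
      exact this
    rcases le_or_gt a c with hac | hca
    · calc (k : ℝ) * a ≤ (k : ℝ) * c := by
            apply mul_le_mul_of_nonneg_left hac (by positivity)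
        _ ≤ topSum y k := L2
    · have hmk : (k : ℝ) ≤ (m : ℝ) := by exact_mod_cast hk.le
      nlinarith [hGm, L1]
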